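/- Define on the set FAd(X) = {(⌊u⌋, t) : ⌊u⌋ a sorted nonempty word on X, 1 ≤ t ≤ |u|, and either t = 1 or the t-th letter of ⌊u⌋ is strictly greater than the (t−1)-th} the operations (⌊u⌋,t) ⊢ (⌊v⌋,p) = (⌊uv⌋, τ_{vu}(p)) and (⌊u⌋,t) ⊣ (⌊v⌋,p) = (⌊uv⌋, τ_{uv}(t)). Then (FAd(X), ⊢, ⊣) is a disemigroup satisfying a ⊢ b = b ⊣ a for all a, b. -/

import Mathlib

variable {X : Type*} [LinearOrder X] [Inhabited X]

/-- ⌊u⌋: the nondecreasing rearrangement of the word u. -/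
def sortW (u : List X) : List X := u.insertionSort (· ≤ ·)

/-- λ_{⌊u⌋}(x): the first (1-based) position of the letter x in ⌊u⌋. -/
def lam (u : List X) (x : X) : ℕ := (sortW u).idxOf x + 1

/-- τ_u(m) = λ_{⌊u⌋}(u_m), where u_m is the m-th (1-based) letter of u. -/
def tau (u : List X) (m : ℕ) : ℕ := lam u (u.getD (m - 1) default)

/-- FAd(X): pairs (⌊u⌋, t) with ⌊u⌋ a sorted nonempty word, 1 ≤ t ≤ |u|, and
either t = 1 or the t-th letter of ⌊u⌋ is strictly greater than the (t−1)-th. -/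
def FAdSet : Set (List X × ℕ) :=
  {p | p.1 ≠ [] ∧ List.Pairwise (· ≤ ·) p.1 ∧ 1 ≤ p.2 ∧ p.2 ≤ p.1.length ∧
    (p.2 = 1 ∨ p.1.getD (p.2 - 2) default < p.1.getD (p.2 - 1) default)}

/-- (⌊u⌋,t) ⊢ (⌊v⌋,p) = (⌊uv⌋, τ_{vu}(p)). -/
def aopL (a b : List X × ℕ) : List X × ℕ := (sortW (a.1 ++ b.1), tau (b.1 ++ a.1) b.2)

/-- (⌊u⌋,t) ⊣ (⌊v⌋,p) = (⌊uv⌋, τ_{uv}(t)). -/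
def aopR (a b : List X × ℕ) : List X × ℕ := (sortW (a.1 ++ b.1), tau (a.1 ++ b.1) a.2)

lemma sortW_sorted (u : List X) : List.Pairwise (· ≤ ·) (sortW u) :=
  List.pairwise_insertionSort _ u

lemma sortW_perm (u : List X) : List.Perm (sortW u) u := List.perm_insertionSort _ u

lemma sortW_eq_of_perm {u v : List X} (h : List.Perm u v) : sortW u = sortW v :=
  List.Perm.eq_of_pairwise' (sortW_sorted u) (sortW_sorted v)
    ((sortW_perm u).trans (h.trans (sortW_perm v).symm))

lemma lam_eq_of_perm {u v : List X} (h : List.Perm u v) (x : X) : lam u x = lam v x := by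
  unfold lam; rw [sortW_eq_of_perm h]

/-- The permutation `⌊uv⌋w ~ u⌊vw⌋`. -/
lemma perm_aux (u v w : List X) :
    List.Perm (sortW (u ++ v) ++ w) (u ++ sortW (v ++ w)) := by
  refine ((sortW_perm (u ++ v)).append_right w).trans ?_
  rw [List.append_assoc]
  exact (sortW_perm (v ++ w)).symm.append_left u

/-- For 1 ≤ t ≤ |u|, τ_{uv}(t) = λ_{⌊uv⌋}(u_t). -/
lemma tau_append_left {u : List X} (v : List X) {t : ℕ} (h1 : 1 ≤ t) (h2 : t ≤ u.length) :
    tau (u ++ v) t = lam (u ++ v) (u.getD (t - 1) default) := by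
  unfold tau
  congr 1
  have hlt : t - 1 < u.length := by omega
  have hlt' : t - 1 < (u ++ v).length := by simp; omega
  rw [List.getD_eq_getElem _ _ hlt', List.getD_eq_getElem _ _ hlt,
    List.getElem_append_left hlt]

/-- The crucial computation: τ_{⌊l⌋w}(λ_l(x)) = λ_{⌊l⌋w}(x) for x ∈ l. -/
lemma tau_sort_append (l w : List X) {x : X} (hx : x ∈ l) :
    tau (sortW l ++ w) (lam l x) = lam (sortW l ++ w) x := by
  have hm : x ∈ sortW l := (sortW_perm l).mem_iff.2 hx
  have hk : (sortW l).idxOf x < (sortW l).length := List.idxOf_lt_length_iff.2 hm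
  unfold tau lam
  congr 2
  have hlt' : (sortW l).idxOf x < (sortW l ++ w).length := by simp; omega
  rw [Nat.add_sub_cancel, List.getD_eq_getElem _ _ hlt',
    List.getElem_append_left hk, List.getElem_idxOf hk]

/-- Closure: (⌊l⌋, λ_l(x)) ∈ FAd(X) whenever x ∈ l. -/
lemma mem_FAd {l : List X} {x : X} (hx : x ∈ l) :
    ((sortW l, lam l x) : List X × ℕ) ∈ FAdSet := by
  have hm : x ∈ sortW l := (sortW_perm l).mem_iff.2 hx
  have hk : (sortW l).idxOf x < (sortW l).length := List.idxOf_lt_length_iff.2 hm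
  refine ⟨?_, sortW_sorted l, ?_, ?_, ?_⟩
  · show sortW l ≠ []
    exact List.ne_nil_of_length_pos (by omega)
  · show 1 ≤ lam l x
    simp [lam]
  · show lam l x ≤ (sortW l).length
    simp only [lam]; omega
  · show lam l x = 1 ∨
      (sortW l).getD (lam l x - 2) default < (sortW l).getD (lam l x - 1) default
    set s := sortW l with hs
    set k := s.idxOf x with hkdef
    simp only [lam, ← hs, ← hkdef]
    rcases Nat.eq_zero_or_pos k with h0 | hpos
    · left; omega
    · right
      have e1 : k + 1 - 2 = k - 1 := by omega
      have e2 : k + 1 - 1 = k := by omega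
      rw [e1, e2]
      have hk1 : k - 1 < s.length := by omega
      have hle : s[k-1] ≤ s[k] :=
        (List.pairwise_iff_getElem.1 (sortW_sorted l)) _ _ hk1 hk (by omega)
      have hxk : s[k] = x := List.getElem_idxOf hk
      have hfind : k - 1 < List.findIdx (· == x) s := by
        have : List.idxOf x s = List.findIdx (· == x) s := rfl
        omega
      have hne : s[k-1] ≠ x := by
        have := List.not_of_lt_findIdx hfind
        simpa using this
      rw [List.getD_eq_getElem _ _ hk1, List.getD_eq_getElem _ _ hk]
      exact lt_of_le_of_ne hle (hxk ▸ hne)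

lemma aopL_eq_aopR_swap (a b : List X × ℕ) : aopL a b = aopR b a :=
  Prod.ext (sortW_eq_of_perm List.perm_append_comm) rfl

lemma aopR_snd_dep (a b c : List X × ℕ) (h : b.1 = c.1) : aopR a b = aopR a c := by
  unfold aopR; rw [h]

lemma aopL_fst_dep (a b c : List X × ℕ) (h : a.1 = b.1) : aopL a c = aopL b c := by
  unfold aopL; rw [h]

lemma aopR_assoc (a b c : List X × ℕ) (h1 : 1 ≤ a.2) (h2 : a.2 ≤ a.1.length) :
    aopR (aopR a b) c = aopR a (aopR b c) := by
  obtain ⟨u, t⟩ := a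
  obtain ⟨v, p⟩ := b
  obtain ⟨w, q⟩ := c
  simp only at h1 h2
  simp only [aopR]
  set x := u.getD (t - 1) default with hxdef
  have hxu : x ∈ u := by
    have hlt : t - 1 < u.length := by omega
    rw [hxdef, List.getD_eq_getElem _ _ hlt]
    exact List.getElem_mem hlt
  have hxuv : x ∈ u ++ v := List.mem_append_left _ hxu
  refine Prod.ext (sortW_eq_of_perm (perm_aux u v w)) ?_
  show tau (sortW (u ++ v) ++ w) (tau (u ++ v) t) = tau (u ++ sortW (v ++ w)) t
  rw [tau_append_left v h1 h2, ← hxdef, tau_sort_append (u ++ v) w hxuv,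
    tau_append_left (sortW (v ++ w)) h1 h2, ← hxdef]
  exact lam_eq_of_perm (perm_aux u v w) x

lemma aopR_mem {a : List X × ℕ} (b : List X × ℕ) (h1 : 1 ≤ a.2) (h2 : a.2 ≤ a.1.length) :
    aopR a b ∈ FAdSet := by
  obtain ⟨u, t⟩ := a
  obtain ⟨v, p⟩ := b
  simp only at h1 h2
  simp only [aopR]
  set x := u.getD (t - 1) default with hxdef
  have hxu : x ∈ u := by
    have hlt : t - 1 < u.length := by omega
    rw [hxdef, List.getD_eq_getElem _ _ hlt]
    exact List.getElem_mem hlt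
  have hxuv : x ∈ u ++ v := List.mem_append_left _ hxu
  have h := mem_FAd hxuv
  rwa [show tau (u ++ v) t = lam (u ++ v) x by
    rw [tau_append_left v h1 h2, ← hxdef]]

/-- (FAd(X), ⊢, ⊣) is a disemigroup (closed under both operations,
both associative, satisfying the three dialgebra identities) with a ⊢ b = b ⊣ a. -/
theorem stmt12 :
    (∀ a ∈ FAdSet (X := X), ∀ b ∈ FAdSet, aopL a b ∈ FAdSet ∧ aopR a b ∈ FAdSet) ∧
    (∀ a ∈ FAdSet (X := X), ∀ b ∈ FAdSet, ∀ c ∈ FAdSet,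
      aopL (aopL a b) c = aopL a (aopL b c) ∧
      aopR (aopR a b) c = aopR a (aopR b c) ∧
      aopR a (aopL b c) = aopR a (aopR b c) ∧
      aopL (aopR a b) c = aopL (aopL a b) c ∧
      aopL a (aopR b c) = aopR (aopL a b) c) ∧
    (∀ a ∈ FAdSet (X := X), ∀ b ∈ FAdSet, aopL a b = aopR b a) := by
  refine ⟨?_, ?_, fun a _ b _ => aopL_eq_aopR_swap a b⟩
  · intro a ha b hb
    exact ⟨(aopL_eq_aopR_swap a b) ▸ aopR_mem a hb.2.2.1 hb.2.2.2.1,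
      aopR_mem b ha.2.2.1 ha.2.2.2.1⟩
  · intro a ha b hb c hc
    obtain ⟨-, -, ha1, ha2, -⟩ := ha
    obtain ⟨-, -, hb1, hb2, -⟩ := hb
    obtain ⟨-, -, hc1, hc2, -⟩ := hc
    refine ⟨?_, aopR_assoc a b c ha1 ha2, ?_, ?_, ?_⟩
    · rw [aopL_eq_aopR_swap, aopL_eq_aopR_swap a b, aopL_eq_aopR_swap a,
        aopL_eq_aopR_swap b c]
      exact (aopR_assoc c b a hc1 hc2).symm
    · exact aopR_snd_dep a _ _ rfl
    · exact aopL_fst_dep _ _ c rfl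
    · rw [aopL_eq_aopR_swap, aopL_eq_aopR_swap a b,
        aopR_assoc b c a hb1 hb2, aopR_assoc b a c hb1 hb2]
      exact aopR_snd_dep b _ _ (sortW_eq_of_perm List.perm_append_comm)
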